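/- For any finite poset P, there exists a finite poset P* such that |P*| ≤ |P| + 3, P* contains P as an induced subposet, and sat*(n, P*) = O(n), i.e. there is a constant C with sat*(n, P*) ≤ C · n for all sufficiently large n. -/

import Mathlib

open Finset Filter

/-- An induced copy of the poset `α` inside the family `𝒜` of subsets of `Fin n`
(representing `[n] = {1,…,n}`): an injective map `f : α → Finset (Fin n)` with image
contained in `𝒜` such that `a ≤ b ↔ f a ⊆ f b`. -/
def IsInducedCopy {α : Type*} [PartialOrder α] {n : ℕ}
    (𝒜 : Finset (Finset (Fin n))) (f : α → Finset (Fin n)) : Prop :=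
  Function.Injective f ∧ (∀ a, f a ∈ 𝒜) ∧ ∀ a b : α, a ≤ b ↔ f a ⊆ f b

/-- The family `𝒜` contains an induced copy of the poset `α`. -/
def ContainsCopy (α : Type*) [PartialOrder α] {n : ℕ}
    (𝒜 : Finset (Finset (Fin n))) : Prop :=
  ∃ f : α → Finset (Fin n), IsInducedCopy 𝒜 f

/-- `𝒜` is an `α`-saturated family: it contains no induced copy of `α`, but adding any
set not in `𝒜` creates an induced copy of `α`. -/
def IsSaturatedFamily (α : Type*) [PartialOrder α] {n : ℕ}
    (𝒜 : Finset (Finset (Fin n))) : Prop :=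
  ¬ ContainsCopy α 𝒜 ∧
    ∀ S : Finset (Fin n), S ∉ 𝒜 → ContainsCopy α (insert S 𝒜)

/-- The induced saturation number `sat*(n, α)`: the minimum size of an `α`-saturated
family of subsets of `[n]`. -/
noncomputable def satStar (α : Type*) [PartialOrder α] (n : ℕ) : ℕ :=
  sInf {k : ℕ | ∃ 𝒜 : Finset (Finset (Fin n)), IsSaturatedFamily α 𝒜 ∧ 𝒜.card = k}

open scoped Classical
set_option linter.unusedSectionVars false
set_option linter.unusedVariables false
set_option maxHeartbeats 1000000

noncomputable section
namespace S9

instance fintypeWithBot (X : Type*) [Fintype X] : Fintype (WithBot X) :=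
  inferInstanceAs (Fintype (Option X))
instance fintypeWithTop (X : Type*) [Fintype X] : Fintype (WithTop X) :=
  inferInstanceAs (Fintype (Option X))

lemma card_withBot (X : Type*) [Fintype X] :
    Fintype.card (WithBot X) = Fintype.card X + 1 := Fintype.card_option
lemma card_withTop (X : Type*) [Fintype X] :
    Fintype.card (WithTop X) = Fintype.card X + 1 := Fintype.card_option

/-- The target poset `Q = ⊥ ⊕ ((P ⊕ ⊤) ∥ x)`. -/
abbrev QT (P : Type) [PartialOrder P] := WithBot ((WithTop P) ⊕ PUnit)

variable {P : Type} [PartialOrder P] [Fintype P]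

lemma ContainsCopy.mono {α : Type*} [PartialOrder α] {n : ℕ}
    {𝒜 ℬ : Finset (Finset (Fin n))} (h : 𝒜 ⊆ ℬ) (hc : ContainsCopy α 𝒜) :
    ContainsCopy α ℬ := by
  obtain ⟨f, h1, h2, h3⟩ := hc
  exact ⟨f, h1, fun a => h (h2 a), h3⟩

/-! ### basic sets -/

def seg (n t : ℕ) : Finset (Fin n) := univ.filter (fun x => (x : ℕ) < t)

@[simp] lemma mem_seg {n t : ℕ} {x : Fin n} : x ∈ seg n t ↔ (x : ℕ) < t := by simp [seg]

lemma seg_mono {n t t' : ℕ} (h : t ≤ t') : seg n t ⊆ seg n t' := by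
  intro x hx; simp only [mem_seg] at *; omega

def hset (n : ℕ) (hi c : ℕ) (p : P) : Finset (Fin n) :=
  univ.filter (fun x => (x : ℕ) < hi ∧ ∀ r : P, p ≤ r → (x : ℕ) ≠ c + (Fintype.equivFin P r : ℕ))

@[simp] lemma mem_hset {n hi c : ℕ} {p : P} {x : Fin n} :
    x ∈ hset n hi c p ↔ (x : ℕ) < hi ∧
      ∀ r : P, p ≤ r → (x : ℕ) ≠ c + (Fintype.equivFin P r : ℕ) := by
  simp [hset]

def bd (M K n a : ℕ) : ℕ := if a < K then a * M else n

lemma eF_lt (r : P) : (Fintype.equivFin P r : ℕ) < Fintype.card P := (Fintype.equivFin P r).2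

lemma hset_subset_seg {n hi c : ℕ} {p : P} : hset n hi c p ⊆ seg n hi := by
  intro x hx; simp only [mem_hset, mem_seg] at *; exact hx.1

lemma seg_subset_hset {n hi c lo : ℕ} {p : P} (h1 : lo ≤ hi) (h2 : lo ≤ c) :
    seg n lo ⊆ hset n hi c p := by
  intro x hx
  simp only [mem_hset, mem_seg] at *
  exact ⟨by omega, fun r _ => by omega⟩

lemma hset_subset_iff {n hi c c' : ℕ} {p p' : P} (hn : hi ≤ n)
    (hc' : c' + Fintype.card P ≤ hi) :
    hset n hi c p ⊆ hset n hi c' p' ↔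
      ∀ r' : P, p' ≤ r' → ∃ r : P, p ≤ r ∧
        c' + (Fintype.equivFin P r' : ℕ) = c + (Fintype.equivFin P r : ℕ) := by
  constructor
  · intro hsub r' hr'
    by_contra hcon
    push_neg at hcon
    have hlt : c' + (Fintype.equivFin P r' : ℕ) < n := by have := eF_lt (P := P) r'; omega
    set x : Fin n := ⟨c' + (Fintype.equivFin P r' : ℕ), hlt⟩ with hx
    have hxin : x ∈ hset n hi c p := by
      simp only [mem_hset]
      constructor
      · have := eF_lt (P := P) r'; simp [hx]; omega
      · intro r hr heq
        exact hcon r hr (by simpa [hx] using heq)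
    have := hsub hxin
    simp only [mem_hset] at this
    exact this.2 r' hr' (by simp [hx])
  · intro h x hx
    simp only [mem_hset] at *
    refine ⟨hx.1, fun r' hr' heq => ?_⟩
    obtain ⟨r, hr, he⟩ := h r' hr'
    exact hx.2 r hr (by omega)

lemma rem_nest {c c' : ℕ} {p p' : P}
    (h : ∀ r' : P, p' ≤ r' → ∃ r : P, p ≤ r ∧
        c' + (Fintype.equivFin P r' : ℕ) = c + (Fintype.equivFin P r : ℕ))
    (hcc : c = c' ∨ c + Fintype.card P ≤ c' ∨ c' + Fintype.card P ≤ c) :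
    c = c' ∧ p ≤ p' := by
  obtain ⟨r, hr, he⟩ := h p' le_rfl
  have h1 := eF_lt (P := P) p'
  have h2 := eF_lt (P := P) r
  have hceq : c = c' := by rcases hcc with h | h | h <;> omega
  refine ⟨hceq, ?_⟩
  have h3 : (Fintype.equivFin P p' : ℕ) = (Fintype.equivFin P r : ℕ) := by omega
  have h4 : p' = r := (Fintype.equivFin P).injective (Fin.ext h3)
  rw [h4]; exact hr

lemma hset_subset_iff' {n hi c c' : ℕ} {p p' : P} (hn : hi ≤ n)
    (hc' : c' + Fintype.card P ≤ hi)
    (hcc : c = c' ∨ c + Fintype.card P ≤ c' ∨ c' + Fintype.card P ≤ c) :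
    hset n hi c p ⊆ hset n hi c' p' ↔ (c = c' ∧ p ≤ p') := by
  rw [hset_subset_iff hn hc']
  constructor
  · intro h; exact rem_nest h hcc
  · rintro ⟨rfl, hpp⟩ r' hr'
    exact ⟨r', le_trans hpp hr', rfl⟩

/-! ### boundary lemmas -/
section bdlem
variable {M K n : ℕ} (hK : K = n / M) (hM : 0 < M) (hn : M ≤ n)
include hK hM hn

lemma K_pos : 1 ≤ K := by rw [hK]; exact (Nat.one_le_div_iff hM).2 hn

lemma bd_le_n {a : ℕ} : bd M K n a ≤ n := by
  unfold bd; split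
  · next h =>
      have h1 : a * M ≤ K * M := Nat.mul_le_mul_right _ (le_of_lt h)
      have h2 : K * M ≤ n := by rw [hK]; exact Nat.div_mul_le_self n M
      omega
  · omega

lemma bd_zero : bd M K n 0 = 0 := by
  have hK1 := K_pos hK hM hn
  unfold bd; rw [if_pos (by omega)]; omega

lemma bd_last {a : ℕ} (h : ¬ a < K) : bd M K n a = n := by unfold bd; rw [if_neg h]

lemma bd_add {a : ℕ} (h : a < K) : bd M K n a + M ≤ bd M K n (a + 1) := by
  unfold bd
  rw [if_pos h]
  split
  · next h2 => rw [Nat.succ_mul]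
  · next h2 =>
      have h3 : a + 1 = K := by omega
      have h4 : (a+1) * M ≤ n := by rw [h3, hK]; exact Nat.div_mul_le_self n M
      rw [Nat.succ_mul] at h4; omega

lemma bd_mono {a b : ℕ} (h : a ≤ b) : bd M K n a ≤ bd M K n b := by
  unfold bd
  split
  · next h1 =>
      split
      · next h2 => exact Nat.mul_le_mul_right _ h
      · next h2 =>
          have h3 : a * M ≤ K * M := Nat.mul_le_mul_right _ (le_of_lt h1)
          have h4 : K * M ≤ n := by rw [hK]; exact Nat.div_mul_le_self n M
          omega
  · next h1 =>
      have h2 : ¬ b < K := by omega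
      rw [if_neg h2]

lemma bd_lt {a : ℕ} (h : a < K) : bd M K n a < bd M K n (a+1) := by
  have := bd_add hK hM hn h; omega

lemma bd_window_le {a : ℕ} (h : a < K) : bd M K n (a+1) - bd M K n a ≤ 2 * M := by
  unfold bd
  rw [if_pos h]
  split
  · next h2 => rw [Nat.succ_mul]; omega
  · next h2 =>
      have h3 : a + 1 = K := by omega
      have h4 : K * M + n % M = n := by rw [hK]; exact Nat.div_add_mod' n M
      have h5 : n % M < M := Nat.mod_lt _ hM
      have h6 : (a + 1) * M = K * M := by rw [h3]
      have h7 : (a + 1) * M = a * M + M := by ring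
      omega

/-- value of bd for `a < K`, needed to locate windows -/
lemma bd_eq {a : ℕ} (h : a < K) : bd M K n a = a * M := by unfold bd; rw [if_pos h]

end bdlem

/-! ### the families -/
section main
variable (n M K : ℕ)

def wset (a i : ℕ) (p : P) : Finset (Fin n) :=
  hset n (bd M K n (a+1)) (bd M K n a + i * Fintype.card P) p

def baseFam : Finset (Finset (Fin n)) :=
  ((range (K+1)).image fun c => seg n (bd M K n c)) ∪
  ((range K).biUnion fun a => (range 2).biUnion fun i =>
      univ.image fun p : P => wset n M K a i p)

def allowFam : Finset (Finset (Fin n)) :=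
  (range K).biUnion fun a =>
    ((seg n (bd M K n (a+1)) \ seg n (bd M K n a)).powerset).image
      fun s => seg n (bd M K n a) ∪ s

variable {n M K}
variable (hK : K = n / M) (hM2 : M = 2 * Fintype.card P + 2) (hn : M ≤ n)

include hK hM2 hn

lemma mem_allow {X : Finset (Fin n)} :
    X ∈ allowFam n M K ↔
      ∃ a < K, seg n (bd M K n a) ⊆ X ∧ X ⊆ seg n (bd M K n (a+1)) := by
  constructor
  · intro hX
    simp only [allowFam, mem_biUnion, mem_image, mem_range, mem_powerset] at hX
    obtain ⟨a, ha, s, hs, rfl⟩ := hX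
    refine ⟨a, ha, subset_union_left, union_subset
      (seg_mono (bd_mono hK (by omega) hn (by omega)))
      (fun x hx => (mem_sdiff.1 (hs hx)).1)⟩
  · rintro ⟨a, ha, h1, h2⟩
    simp only [allowFam, mem_biUnion, mem_image, mem_range, mem_powerset]
    refine ⟨a, ha, X \ seg n (bd M K n a), fun x hx => ?_, ?_⟩
    · rw [Finset.mem_sdiff] at hx ⊢
      exact ⟨h2 hx.1, hx.2⟩
    · ext x
      simp only [mem_union, Finset.mem_sdiff]
      constructor
      · rintro (h | h)
        · exact h1 h
        · exact h.1
      · intro hx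
        by_cases hxa : x ∈ seg n (bd M K n a)
        · exact Or.inl hxa
        · exact Or.inr ⟨hx, hxa⟩

lemma wset_span {a i : ℕ} (ha : a < K) (hi2 : i < 2) (p : P) :
    seg n (bd M K n a) ⊆ wset n M K a i p ∧ wset n M K a i p ⊆ seg n (bd M K n (a+1)) := by
  have h1 := bd_lt (M := M) (K := K) (n := n) hK (by omega) hn ha
  exact ⟨seg_subset_hset (le_of_lt h1) (Nat.le_add_right _ _), hset_subset_seg⟩

lemma base_subset_allow : baseFam (P := P) n M K ⊆ allowFam n M K := by
  intro X hX
  rw [mem_allow hK hM2 hn]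
  simp only [baseFam, mem_union, mem_image, mem_biUnion, mem_range, mem_univ] at hX
  rcases hX with ⟨c, hc, rfl⟩ | ⟨a, ha, i, hi2, p, _, rfl⟩
  · rcases Nat.lt_or_ge c K with h | h
    · exact ⟨c, h, le_refl _, seg_mono (bd_mono hK (by omega) hn (by omega))⟩
    · have hK1 := K_pos hK (by omega) hn
      refine ⟨K - 1, by omega, ?_, ?_⟩
      · rw [bd_last (a := c) hK (by omega) hn (by omega)]
        exact seg_mono (bd_le_n hK (by omega) hn)
      · have he : K - 1 + 1 = K := by omega
        rw [he, bd_last (a := K) hK (by omega) hn (lt_irrefl K),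
          bd_last (a := c) hK (by omega) hn (by omega)]
  · exact ⟨a, ha, (wset_span hK hM2 hn ha hi2 p).1, (wset_span hK hM2 hn ha hi2 p).2⟩


/-! ### window forms and isolation -/

def WForm (a : ℕ) (X : Finset (Fin n)) : Prop :=
  ∃ i < 2, ∃ p : P, X = wset n M K a i p

lemma wform_span {a : ℕ} {X : Finset (Fin n)} (ha : a < K) (h : WForm (P := P) (n := n) (M := M) (K := K) a X) :
    seg n (bd M K n a) ⊆ X ∧ X ⊆ seg n (bd M K n (a+1)) := by
  obtain ⟨i, hi2, p, rfl⟩ := h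
  exact wset_span hK hM2 hn ha hi2 p

/-- the removed witness of a window set -/
lemma wset_missing {a i : ℕ} (ha : a < K) (hi2 : i < 2) (p : P) :
    ∃ x : Fin n, (x : ℕ) = bd M K n a + i * Fintype.card P + (Fintype.equivFin P p : ℕ) ∧
      x ∉ wset n M K a i p ∧ (x : ℕ) < bd M K n (a+1) ∧ bd M K n a ≤ (x : ℕ) := by
  have hcard := eF_lt (P := P) p
  have hadd := bd_add (M := M) (K := K) (n := n) hK (by omega) hn ha
  have hlen : bd M K n a + i * Fintype.card P + (Fintype.equivFin P p : ℕ) < bd M K n (a+1) := by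
    have h01 : i = 0 ∨ i = 1 := by omega
    rcases h01 with rfl | rfl <;> omega
  have hn' : bd M K n a + i * Fintype.card P + (Fintype.equivFin P p : ℕ) < n := by
    have := bd_le_n (M := M) (K := K) (n := n) (a := a+1) hK (by omega) hn
    omega
  refine ⟨⟨_, hn'⟩, rfl, ?_, hlen, (by omega : bd M K n a ≤ bd M K n a + i * Fintype.card P + (Fintype.equivFin P p : ℕ))⟩
  simp only [wset, mem_hset, not_and, not_forall]
  intro _
  exact ⟨p, le_rfl, by simp⟩

/-- the top witness of a window set -/
lemma wset_top_mem {a i : ℕ} (ha : a < K) (hi2 : i < 2) (p : P) :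
    ∃ y : Fin n, (y : ℕ) = bd M K n (a+1) - 1 ∧ y ∈ wset n M K a i p := by
  have hadd := bd_add (M := M) (K := K) (n := n) hK (by omega) hn ha
  have hle := bd_le_n (M := M) (K := K) (n := n) (a := a+1) hK (by omega) hn
  have hn' : bd M K n (a+1) - 1 < n := by omega
  refine ⟨⟨_, hn'⟩, rfl, ?_⟩
  simp only [wset, mem_hset]
  constructor
  · exact (by omega : bd M K n (a+1) - 1 < bd M K n (a+1))
  · intro r hr heq
    have h1 := eF_lt (P := P) r
    have h2 : i * Fintype.card P ≤ Fintype.card P := by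
      have h01 : i = 0 ∨ i = 1 := by omega
      rcases h01 with rfl | rfl <;> omega
    have heq' : bd M K n (a+1) - 1
        = bd M K n a + i * Fintype.card P + (Fintype.equivFin P r : ℕ) := heq
    omega

lemma wform_not_seg {a t : ℕ} {X : Finset (Fin n)} (ha : a < K)
    (h : WForm (P := P) (n := n) (M := M) (K := K) a X) : X ≠ seg n t := by
  obtain ⟨i, hi2, p, rfl⟩ := h
  intro hEq
  obtain ⟨x, hxv, hxn, hxlt, hxge⟩ := wset_missing hK hM2 hn ha hi2 p
  obtain ⟨y, hyv, hy⟩ := wset_top_mem hK hM2 hn ha hi2 p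
  rw [hEq] at hxn hy
  simp only [mem_seg] at hxn hy
  push_neg at hxn
  omega

lemma wform_unique {a a' : ℕ} {X : Finset (Fin n)} (ha : a < K) (ha' : a' < K)
    (h : WForm (P := P) (n := n) (M := M) (K := K) a X) (h' : WForm (P := P) (n := n) (M := M) (K := K) a' X) :
    a = a' := by
  by_contra hne
  -- wlog via cases
  rcases Nat.lt_or_ge a a' with hlt | hge
  · have h1 := (wform_span hK hM2 hn ha h).2
    have h2 := (wform_span hK hM2 hn ha' h').1
    have h3 : bd M K n (a+1) ≤ bd M K n a' := bd_mono hK (by omega) hn (by omega)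
    have : X = seg n (bd M K n a') :=
      Subset.antisymm (h1.trans (seg_mono h3)) h2
    exact wform_not_seg hK hM2 hn ha h this
  · have hlt : a' < a := by omega
    have h1 := (wform_span hK hM2 hn ha' h').2
    have h2 := (wform_span hK hM2 hn ha h).1
    have h3 : bd M K n (a'+1) ≤ bd M K n a := bd_mono hK (by omega) hn (by omega)
    have : X = seg n (bd M K n a) :=
      Subset.antisymm (h1.trans (seg_mono h3)) h2
    exact wform_not_seg hK hM2 hn ha' h' this

lemma mem_base {X : Finset (Fin n)} :
    X ∈ baseFam (P := P) n M K ↔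
      (∃ c ≤ K, X = seg n (bd M K n c)) ∨ ∃ a < K, WForm (P := P) (n := n) (M := M) (K := K) a X := by
  simp only [baseFam, mem_union, mem_image, mem_biUnion, mem_range, mem_univ, WForm]
  constructor
  · rintro (⟨c, hc, rfl⟩ | ⟨a, ha, i, hi2, p, _, rfl⟩)
    · exact Or.inl ⟨c, by omega, rfl⟩
    · exact Or.inr ⟨a, ha, i, hi2, p, rfl⟩
  · rintro (⟨c, hc, rfl⟩ | ⟨a, ha, i, hi2, p, rfl⟩)
    · exact Or.inl ⟨c, by omega, rfl⟩
    · exact Or.inr ⟨a, ha, i, hi2, p, ⟨trivial, rfl⟩⟩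

/-- isolation: two incomparable members of the base family are window sets of a common window -/
lemma base_isolation {X Y : Finset (Fin n)}
    (hX : X ∈ baseFam (P := P) n M K) (hY : Y ∈ baseFam (P := P) n M K)
    (h1 : ¬ X ⊆ Y) (h2 : ¬ Y ⊆ X) :
    ∃ a < K, WForm (P := P) (n := n) (M := M) (K := K) a X ∧ WForm (P := P) (n := n) (M := M) (K := K) a Y := by
  rw [mem_base hK hM2 hn] at hX hY
  -- a helper: every base element has a span
  have span : ∀ Z : Finset (Fin n),
      ((∃ c ≤ K, Z = seg n (bd M K n c)) ∨ ∃ a < K, WForm (P := P) (n := n) (M := M) (K := K) a Z) →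
      ∃ lo hi' : ℕ, lo ≤ hi' ∧ seg n lo ⊆ Z ∧ Z ⊆ seg n hi' := by
    rintro Z (⟨c, hc, rfl⟩ | ⟨a, ha, hw⟩)
    · exact ⟨bd M K n c, bd M K n c, le_rfl, le_refl _, le_refl _⟩
    · exact ⟨bd M K n a, bd M K n (a+1), le_of_lt (bd_lt hK (by omega) hn ha),
        (wform_span hK hM2 hn ha hw).1, (wform_span hK hM2 hn ha hw).2⟩
  rcases hX with hXs | ⟨a, ha, hwX⟩
  · -- X is a segment: X comparable with everything, contradiction
    exfalso
    obtain ⟨c, hc, rfl⟩ := hXs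
    obtain ⟨lo, hi', hlh, hs1, hs2⟩ := span Y hY
    rcases le_or_gt (bd M K n c) lo with h | h
    · exact h1 ((seg_mono h).trans hs1)
    · rcases hY with ⟨c', hc', rfl⟩ | ⟨a', ha', hwY⟩
      · rcases Nat.le_total (bd M K n c) (bd M K n c') with hh | hh
        · exact h1 (seg_mono hh)
        · exact h2 (seg_mono hh)
      · -- Y window a' : lo = bd a', hi' = bd (a'+1); bd c > bd a' hence bd c ≥ bd (a'+1)?
        have hcle : bd M K n c ≤ bd M K n a' ∨ bd M K n (a'+1) ≤ bd M K n c := by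
          rcases le_or_gt c a' with hh | hh
          · exact Or.inl (bd_mono hK (by omega) hn hh)
          · exact Or.inr (bd_mono hK (by omega) hn (by omega))
        have hsp := wform_span hK hM2 hn ha' hwY
        rcases hcle with hh | hh
        · exact h1 ((seg_mono hh).trans hsp.1)
        · exact h2 (hsp.2.trans (seg_mono hh))
  · rcases hY with hYs | ⟨a', ha', hwY⟩
    · exfalso
      obtain ⟨c, hc, rfl⟩ := hYs
      have hsp := wform_span hK hM2 hn ha hwX
      have hcle : bd M K n c ≤ bd M K n a ∨ bd M K n (a+1) ≤ bd M K n c := by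
        rcases le_or_gt c a with hh | hh
        · exact Or.inl (bd_mono hK (by omega) hn hh)
        · exact Or.inr (bd_mono hK (by omega) hn (by omega))
      rcases hcle with hh | hh
      · exact h2 ((seg_mono hh).trans hsp.1)
      · exact h1 (hsp.2.trans (seg_mono hh))
    · -- both windows
      rcases Nat.lt_trichotomy a a' with hlt | heq | hgt
      · exfalso
        have hsx := (wform_span hK hM2 hn ha hwX).2
        have hsy := (wform_span hK hM2 hn ha' hwY).1
        exact h1 ((hsx.trans (seg_mono (bd_mono hK (by omega) hn (by omega)))).trans hsy)
      · exact ⟨a, ha, hwX, heq ▸ hwY⟩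
      · exfalso
        have hsy := (wform_span hK hM2 hn ha' hwY).2
        have hsx := (wform_span hK hM2 hn ha hwX).1
        exact h2 ((hsy.trans (seg_mono (bd_mono hK (by omega) hn (by omega)))).trans hsx)

/-- subset relation between window sets of the same window -/
lemma wset_subset_wset {a i i' : ℕ} {p p' : P} (ha : a < K) (hi2 : i < 2) (hi2' : i' < 2) :
    wset n M K a i p ⊆ wset n M K a i' p' ↔ (i = i' ∧ p ≤ p') := by
  have hone : 1 ≤ Fintype.card P := Fintype.card_pos_iff.2 ⟨p⟩
  have hadd := bd_add (M := M) (K := K) (n := n) hK (by omega) hn ha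
  have hle := bd_le_n (M := M) (K := K) (n := n) (a := a+1) hK (by omega) hn
  have hi'm : i' * Fintype.card P ≤ Fintype.card P := by
    have h01 : i' = 0 ∨ i' = 1 := by omega
    rcases h01 with rfl | rfl <;> omega
  have h := hset_subset_iff' (n := n) (c := bd M K n a + i * Fintype.card P)
      (c' := bd M K n a + i' * Fintype.card P) (p := p) (p' := p') hle (by omega) ?_
  · rw [wset, wset, h]
    constructor
    · rintro ⟨hc, hp⟩
      refine ⟨?_, hp⟩
      have : i * Fintype.card P = i' * Fintype.card P := by omega
      exact Nat.eq_of_mul_eq_mul_right hone this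
    · rintro ⟨rfl, hp⟩
      exact ⟨rfl, hp⟩
  · rcases Nat.lt_trichotomy i i' with hlt | heq | hgt
    · have : i = 0 ∧ i' = 1 := by omega
      obtain ⟨rfl, rfl⟩ := this
      right; left; omega
    · left; rw [heq]
    · have : i' = 0 ∧ i = 1 := by omega
      obtain ⟨rfl, rfl⟩ := this
      right; right; omega


/-! ### elements of `Q` and its order -/

section qelems
omit hK hM2 hn

def qb : QT P := ⊥
def qt : QT P := (Sum.inl (⊤ : WithTop P) : (WithTop P) ⊕ PUnit)
def qx : QT P := (Sum.inr PUnit.unit : (WithTop P) ⊕ PUnit)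
def qp (p : P) : QT P := (Sum.inl ((p : WithTop P)) : (WithTop P) ⊕ PUnit)

lemma qb_le (v : QT P) : qb (P := P) ≤ v := bot_le
lemma not_qt_le_qb : ¬ (qt (P := P) ≤ qb) := by simp [qt, qb]
lemma not_qx_le_qb : ¬ (qx (P := P) ≤ qb) := by simp [qx, qb]
lemma not_qp_le_qb (p : P) : ¬ (qp p ≤ qb) := by simp [qp, qb]
lemma qp_le_qt (p : P) : qp p ≤ qt := by
  rw [qp, qt, WithBot.coe_le_coe]
  exact Sum.inl_le_inl_iff.2 le_top
lemma not_qt_le_qp (p : P) : ¬ (qt (P := P) ≤ qp p) := by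
  rw [qt, qp, WithBot.coe_le_coe]
  intro h
  exact (by simp : ¬ ((⊤ : WithTop P) ≤ (p : WithTop P))) (Sum.inl_le_inl_iff.1 h)
lemma not_qp_le_qx (p : P) : ¬ (qp p ≤ qx) := by
  rw [qp, qx, WithBot.coe_le_coe]
  exact Sum.not_inl_le_inr
lemma not_qx_le_qp (p : P) : ¬ (qx (P := P) ≤ qp p) := by
  rw [qp, qx, WithBot.coe_le_coe]
  exact Sum.not_inr_le_inl
lemma not_qt_le_qx : ¬ (qt (P := P) ≤ qx) := by
  rw [qt, qx, WithBot.coe_le_coe]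
  exact Sum.not_inl_le_inr
lemma not_qx_le_qt : ¬ (qx (P := P) ≤ qt) := by
  rw [qt, qx, WithBot.coe_le_coe]
  exact Sum.not_inr_le_inl
lemma qp_le_qp {p q : P} : qp p ≤ qp q ↔ p ≤ q := by
  rw [qp, qp, WithBot.coe_le_coe, Sum.inl_le_inl_iff, WithTop.coe_le_coe]

/-- the map `WithTop P → QT P` by `inl` -/
def ql (v : WithTop P) : QT P := (Sum.inl v : (WithTop P) ⊕ PUnit)

lemma ql_inj : Function.Injective (ql (P := P)) := by
  intro v w h
  rw [ql, ql] at h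
  exact Sum.inl_injective (WithBot.coe_injective h)

lemma ql_top : ql (⊤ : WithTop P) = qt := rfl
lemma ql_coe (p : P) : ql (p : WithTop P) = qp p := rfl

lemma ql_le_qx_incomp (v : WithTop P) :
    ¬ (ql v ≤ qx (P := P)) ∧ ¬ (qx (P := P) ≤ ql v) := by
  constructor
  · rw [ql, qx, WithBot.coe_le_coe]; exact Sum.not_inl_le_inr
  · rw [ql, qx, WithBot.coe_le_coe]; exact Sum.not_inr_le_inl

lemma ql_le_qt (v : WithTop P) : ql v ≤ qt := by
  rw [ql, qt, WithBot.coe_le_coe]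
  exact Sum.inl_le_inl_iff.2 le_top

end qelems

/-- The base family contains no induced copy of `Q`. -/
lemma base_nocopy : ¬ ContainsCopy (QT P) (baseFam (P := P) n M K) := by
  rintro ⟨φ, hinj, hmem, hiff⟩
  -- the images of `x` and `t` are incomparable
  have hxt1 : ¬ φ (qx) ⊆ φ (qt) := fun h => not_qx_le_qt ((hiff _ _).2 h)
  have hxt2 : ¬ φ (qt) ⊆ φ (qx) := fun h => not_qt_le_qx ((hiff _ _).2 h)
  obtain ⟨a, ha, hWx, hWt⟩ := base_isolation hK hM2 hn (hmem qx) (hmem qt) hxt1 hxt2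
  -- every `ql v` lands in window `a`
  have hall : ∀ v : WithTop P, WForm (P := P) (n := n) (M := M) (K := K) a (φ (ql v)) := by
    intro v
    rcases v with _ | p
    · exact hWt
    · have h1 : ¬ φ (qp p) ⊆ φ (qx) := fun h => not_qp_le_qx p ((hiff _ _).2 h)
      have h2 : ¬ φ (qx) ⊆ φ (qp p) := fun h => not_qx_le_qp p ((hiff _ _).2 h)
      obtain ⟨a', ha', hWp, hWx'⟩ := base_isolation hK hM2 hn (hmem (qp p)) (hmem qx) h1 h2
      have : a' = a := wform_unique hK hM2 hn ha' ha hWx' hWx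
      exact this ▸ hWp
  -- choose the parameters
  choose iv hiv pv hpv using hall
  -- all block indices agree with that of ⊤
  have hblock : ∀ v : WithTop P, iv v = iv ⊤ := by
    intro v
    rcases v with _ | p
    · rfl
    · have hsub : φ (ql (p : WithTop P)) ⊆ φ (ql ⊤) := (hiff _ _).1 (ql_le_qt _)
      rw [hpv, hpv] at hsub
      exact ((wset_subset_wset hK hM2 hn ha (hiv _) (hiv _)).1 hsub).1
  -- the map `v ↦ pv v` is injective
  have hpinj : Function.Injective pv := by
    intro v w h
    have : φ (ql v) = φ (ql w) := by
      rw [hpv, hpv, hblock v, hblock w, h]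
    exact ql_inj (hinj this)
  have hcard := Fintype.card_le_of_injective pv hpinj
  rw [card_withTop] at hcard
  omega


/-! ### generic copy builder -/

section builder
omit hK hM2 hn
variable {𝒜 : Finset (Finset (Fin n))} {A B S' : Finset (Fin n)} {w : P → Finset (Fin n)}

lemma copy_builder
    (hA𝒜 : A ∈ 𝒜) (hB𝒜 : B ∈ 𝒜) (hS𝒜 : S' ∈ 𝒜) (hw𝒜 : ∀ p, w p ∈ 𝒜)
    (hAB : A ⊆ B) (hBA : ¬ B ⊆ A)
    (hAw : ∀ p, A ⊆ w p) (hwA : ∀ p, ¬ w p ⊆ A)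
    (hAS : A ⊆ S') (hSA : ¬ S' ⊆ A)
    (hwB : ∀ p, w p ⊆ B) (hBw : ∀ p, ¬ B ⊆ w p)
    (hww : ∀ p q, w p ⊆ w q ↔ p ≤ q)
    (hwS : ∀ p, ¬ w p ⊆ S') (hSw : ∀ p, ¬ S' ⊆ w p)
    (hBS : ¬ B ⊆ S') (hSB : ¬ S' ⊆ B) :
    ContainsCopy (QT P) 𝒜 := by
  refine ⟨fun v => match v with
    | none => A
    | some (Sum.inl none) => B
    | some (Sum.inl (some p)) => w p
    | some (Sum.inr _) => S', ?_, ?_, ?_⟩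
  · -- injectivity
    intro v v' h
    rcases v with _ | (t | uu) <;> rcases v' with _ | (t' | uu')
    · rfl
    · rcases t' with _ | p
      · simp only at h; exact absurd (h ▸ Finset.Subset.refl A) hBA
      · simp only at h; exact absurd (h ▸ Finset.Subset.refl A) (hwA p)
    · simp only at h; exact absurd (h ▸ Finset.Subset.refl A) hSA
    · rcases t with _ | p
      · simp only at h; exact absurd (h ▸ Finset.Subset.refl B) hBA
      · simp only at h; exact absurd (h ▸ Finset.Subset.refl (w p)) (hwA p)
    · rcases t with _ | p <;> rcases t' with _ | p'
      · rfl
      · simp only at h; exact absurd (h ▸ Finset.Subset.refl (w p')) (hBw p')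
      · simp only at h; exact absurd (h ▸ Finset.Subset.refl (w p)) (hBw p)
      · simp only at h
        have h1 : p ≤ p' := (hww p p').1 (h ▸ Finset.Subset.refl (w p))
        have h2 : p' ≤ p := (hww p' p).1 (h ▸ Finset.Subset.refl (w p'))
        rw [le_antisymm h1 h2]
    · rcases t with _ | p
      · simp only at h; exact absurd (h ▸ Finset.Subset.refl B) hBS
      · simp only at h; exact absurd (h ▸ Finset.Subset.refl (w p)) (hwS p)
    · simp only at h; exact absurd (h ▸ Finset.Subset.refl S') hSA
    · rcases t' with _ | p
      · simp only at h; exact absurd (h ▸ Finset.Subset.refl S') hSB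
      · simp only at h; exact absurd (h ▸ Finset.Subset.refl S') (hSw p)
    · rfl
  · -- membership
    intro v
    rcases v with _ | (t | uu)
    · exact hA𝒜
    · rcases t with _ | p
      · exact hB𝒜
      · exact hw𝒜 p
    · exact hS𝒜
  · -- the order iff
    intro v v'
    rcases v with _ | (t | uu) <;> rcases v' with _ | (t' | uu')
    · exact iff_of_true le_rfl (Finset.Subset.refl A)
    · rcases t' with _ | p
      · exact iff_of_true bot_le hAB
      · exact iff_of_true bot_le (hAw p)
    · exact iff_of_true bot_le hAS
    · rcases t with _ | p
      · exact iff_of_false not_qt_le_qb hBA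
      · exact iff_of_false (not_qp_le_qb p) (hwA p)
    · rcases t with _ | p <;> rcases t' with _ | p'
      · exact iff_of_true le_rfl (Finset.Subset.refl B)
      · exact iff_of_false (not_qt_le_qp p') (hBw p')
      · exact iff_of_true (qp_le_qt p) (hwB p)
      · exact (qp_le_qp (P := P)).trans (hww p p').symm
    · rcases t with _ | p
      · exact iff_of_false not_qt_le_qx hBS
      · exact iff_of_false (not_qp_le_qx p) (hwS p)
    · exact iff_of_false not_qx_le_qb hSA
    · rcases t' with _ | p
      · exact iff_of_false not_qx_le_qt hSB
      · exact iff_of_false (not_qx_le_qp p) (hSw p)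
    · exact iff_of_true le_rfl (Finset.Subset.refl S')

end builder


/-! ### inserting a non-confined set creates a copy -/

lemma empty_mem_allow : (∅ : Finset (Fin n)) ∈ allowFam n M K := by
  rw [mem_allow hK hM2 hn]
  refine ⟨0, K_pos hK (by omega) hn, ?_, empty_subset _⟩
  rw [bd_zero hK (by omega) hn]
  intro x hx
  simp only [mem_seg] at hx
  omega

lemma univ_mem_allow : (univ : Finset (Fin n)) ∈ allowFam n M K := by
  rw [mem_allow hK hM2 hn]
  have hK1 := K_pos hK (by omega) hn
  refine ⟨K - 1, by omega, subset_univ _, ?_⟩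
  have he : K - 1 + 1 = K := by omega
  rw [he, bd_last (a := K) hK (by omega) hn (lt_irrefl K)]
  intro x hx
  simp only [mem_seg]
  exact x.2

lemma insert_copy {S : Finset (Fin n)} (hS : S ∉ allowFam n M K)
    {G : Finset (Finset (Fin n))} (hG : baseFam (P := P) n M K ⊆ G) :
    ContainsCopy (QT P) (insert S G) := by
  have hK1 := K_pos hK (by omega) hn
  -- S is neither empty nor everything
  have hSne : S ≠ ∅ := fun h => hS (h ▸ empty_mem_allow hK hM2 hn)
  have hSnu : S ≠ univ := fun h => hS (h ▸ univ_mem_allow hK hM2 hn)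
  -- minimum missing element j
  have hcne : (univ \ S).Nonempty := by
    rw [sdiff_nonempty]
    intro h
    exact hSnu (Subset.antisymm (subset_univ S) h)
  set j : Fin n := (univ \ S).min' hcne with hj
  have hjS : j ∉ S := by
    have := Finset.min'_mem (univ \ S) hcne
    rw [← hj] at this
    exact (mem_sdiff.1 this).2
  have hjmin : ∀ x : Fin n, (x : ℕ) < (j : ℕ) → x ∈ S := by
    intro x hx
    by_contra hxS
    have : j ≤ x := Finset.min'_le _ _ (mem_sdiff.2 ⟨mem_univ x, hxS⟩)
    rw [Fin.le_def] at this
    omega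
  -- maximum present element j'
  have hSne' : S.Nonempty := nonempty_iff_ne_empty.2 hSne
  set j' : Fin n := S.max' hSne' with hj'
  have hj'S : j' ∈ S := S.max'_mem hSne'
  have hj'max : ∀ x ∈ S, (x : ℕ) ≤ (j' : ℕ) := fun x hx => Fin.le_def.1 (S.le_max' x hx)
  -- the window u of j
  set u : ℕ := min ((j : ℕ) / M) (K - 1) with hu
  have huK : u < K := by omega
  have hbu : bd M K n u ≤ (j : ℕ) := by
    rw [bd_eq hK (by omega) hn huK]
    rcases le_total ((j : ℕ) / M) (K - 1) with h | h
    · have : u = (j : ℕ) / M := by omega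
      rw [this]
      exact Nat.div_mul_le_self _ _
    · have h2 : u = K - 1 := by omega
      rw [h2]
      calc (K - 1) * M ≤ ((j : ℕ) / M) * M := Nat.mul_le_mul_right _ h
      _ ≤ (j : ℕ) := Nat.div_mul_le_self _ _
  have hjlt : (j : ℕ) < bd M K n (u+1) := by
    rcases Nat.lt_or_ge (u+1) K with h | h
    · rw [bd_eq hK (by omega) hn h]
      have h2 : u = (j : ℕ) / M := by omega
      have h3 := Nat.div_add_mod (j : ℕ) M
      have h4 : (j : ℕ) % M < M := Nat.mod_lt _ (by omega)
      have h5 : (u + 1) * M = u * M + M := by ring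
      have h6 : u * M = ((j:ℕ)/M) * M := by rw [h2]
      have h7 : M * ((j:ℕ)/M) = ((j:ℕ)/M) * M := by ring
      omega
    · rw [bd_last hK (by omega) hn (by omega)]
      exact j.2
  -- the lower boundary segment is inside S
  have hseg : seg n (bd M K n u) ⊆ S := by
    intro x hx
    simp only [mem_seg] at hx
    exact hjmin x (by omega)
  -- S is not confined in window u, so j' is beyond the next boundary
  have hnotc : ¬ S ⊆ seg n (bd M K n (u+1)) := by
    intro h
    exact hS ((mem_allow hK hM2 hn).2 ⟨u, huK, hseg, h⟩)
  have hj'big : bd M K n (u+1) ≤ (j' : ℕ) := by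
    by_contra h
    push_neg at h
    refine hnotc (fun x hx => ?_)
    simp only [mem_seg]
    have := hj'max x hx
    omega
  -- block choice
  set e : ℕ := (j : ℕ) - bd M K n u with he
  set i : ℕ := if e < Fintype.card P then 1 else 0 with hi
  have hi2 : i < 2 := by rw [hi]; split <;> omega
  -- j is in every window set of block i
  have hjin : ∀ p : P, j ∈ wset n M K u i p := by
    intro p
    simp only [wset, mem_hset]
    refine ⟨hjlt, fun r hr heq => ?_⟩
    have h1 := eF_lt (P := P) r
    rw [hi] at heq
    split at heq
    · next hcase => omega
    · next hcase => omega
  -- j' is in no window set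
  have hj'nin : ∀ p : P, j' ∉ wset n M K u i p := by
    intro p hmem
    simp only [wset, mem_hset] at hmem
    omega
  -- memberships
  have hsegu_mem : seg n (bd M K n u) ∈ baseFam (P := P) n M K := by
    rw [mem_base hK hM2 hn]; exact Or.inl ⟨u, by omega, rfl⟩
  have hsegu1_mem : seg n (bd M K n (u+1)) ∈ baseFam (P := P) n M K := by
    rw [mem_base hK hM2 hn]; exact Or.inl ⟨u+1, by omega, rfl⟩
  have hw_mem : ∀ p : P, wset n M K u i p ∈ baseFam (P := P) n M K := by
    intro p
    rw [mem_base hK hM2 hn]; exact Or.inr ⟨u, huK, i, hi2, p, rfl⟩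
  -- now build the copy
  have hjn := j.2
  apply copy_builder (A := seg n (bd M K n u)) (B := seg n (bd M K n (u+1)))
      (S' := S) (w := fun p => wset n M K u i p)
  -- memberships
  · exact mem_insert_of_mem (hG hsegu_mem)
  · exact mem_insert_of_mem (hG hsegu1_mem)
  · exact mem_insert_self _ _
  · exact fun p => mem_insert_of_mem (hG (hw_mem p))
  -- A ⊆ B and ¬ B ⊆ A
  · exact seg_mono (bd_mono hK (by omega) hn (by omega))
  · intro h
    have : j ∈ seg n (bd M K n u) := h (by simp only [mem_seg]; omega)
    simp only [mem_seg] at this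
    omega
  -- A ⊆ w p and ¬ w p ⊆ A
  · exact fun p => (wset_span hK hM2 hn huK hi2 p).1
  · intro p h
    have := h (hjin p)
    simp only [mem_seg] at this
    omega
  -- A ⊆ S and ¬ S ⊆ A
  · exact hseg
  · intro h
    have := h hj'S
    simp only [mem_seg] at this
    omega
  -- w p ⊆ B and ¬ B ⊆ w p
  · exact fun p => (wset_span hK hM2 hn huK hi2 p).2
  · intro p h
    obtain ⟨x, hxv, hxn, hxlt, hxge⟩ := wset_missing hK hM2 hn huK hi2 p
    exact hxn (h (by simp only [mem_seg]; omega))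
  -- w p ⊆ w q ↔ p ≤ q
  · intro p q
    rw [wset_subset_wset hK hM2 hn huK hi2 hi2]
    simp
  -- ¬ w p ⊆ S and ¬ S ⊆ w p
  · exact fun p h => hjS (h (hjin p))
  · exact fun p h => hj'nin p (h hj'S)
  -- ¬ B ⊆ S and ¬ S ⊆ B
  · intro h
    exact hjS (h (by simp only [mem_seg]; omega))
  · intro h
    have := h hj'S
    simp only [mem_seg] at this
    omega


/-! ### cardinality bound -/

lemma sdiff_seg_card {t t' : ℕ} : (seg n t' \ seg n t).card ≤ t' - t := by
  have h : (seg n t' \ seg n t).card ≤ (Finset.range (t' - t)).card := by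
    refine Finset.card_le_card_of_injOn (fun x => (x : ℕ) - t) ?_ ?_
    · intro x hx
      simp only [Finset.coe_sdiff, Set.mem_diff, Finset.mem_coe, Finset.mem_sdiff, mem_seg, not_lt] at hx
      simp only [Finset.mem_coe, Finset.mem_range]
      omega
    · intro x hx y hy hxy
      simp only [Finset.coe_sdiff, Set.mem_diff, Finset.mem_coe, mem_seg, not_lt] at hx hy
      have hxy' : (x : ℕ) - t = (y : ℕ) - t := hxy
      exact Fin.ext (by omega)
  simpa using h

lemma allow_card : (allowFam n M K).card ≤ K * 2 ^ (2 * M) := by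
  refine le_trans (Finset.card_biUnion_le) ?_
  have hsum : ∀ a ∈ Finset.range K,
      (((seg n (bd M K n (a+1)) \ seg n (bd M K n a)).powerset).image
        fun s => seg n (bd M K n a) ∪ s).card ≤ 2 ^ (2 * M) := by
    intro a ha
    rw [Finset.mem_range] at ha
    refine le_trans Finset.card_image_le ?_
    rw [Finset.card_powerset]
    apply Nat.pow_le_pow_right (by omega)
    refine le_trans (sdiff_seg_card hK hM2 hn) ?_
    have := bd_window_le (M := M) (K := K) (n := n) hK (by omega) hn ha
    omega
  refine le_trans (Finset.sum_le_sum hsum) ?_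
  rw [Finset.sum_const, Finset.card_range, smul_eq_mul]

/-! ### existence of a saturated family -/

lemma exists_sat : ∃ F : Finset (Finset (Fin n)),
    F ⊆ allowFam n M K ∧ IsSaturatedFamily (QT P) F := by
  set 𝒮 := (allowFam n M K).powerset.filter
      (fun F => baseFam (P := P) n M K ⊆ F ∧ ¬ ContainsCopy (QT P) F) with h𝒮
  have hbase : baseFam (P := P) n M K ∈ 𝒮 := by
    rw [h𝒮, Finset.mem_filter, Finset.mem_powerset]
    exact ⟨base_subset_allow hK hM2 hn, Finset.Subset.refl _, base_nocopy hK hM2 hn⟩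
  obtain ⟨F, hF𝒮, hFmax⟩ := Finset.exists_max_image 𝒮 Finset.card ⟨_, hbase⟩
  rw [h𝒮, Finset.mem_filter, Finset.mem_powerset] at hF𝒮
  obtain ⟨hFallow, hFbase, hFno⟩ := hF𝒮
  refine ⟨F, hFallow, hFno, ?_⟩
  intro S hSF
  by_cases hSallow : S ∈ allowFam n M K
  · by_contra hno
    have hmem : insert S F ∈ 𝒮 := by
      rw [h𝒮, Finset.mem_filter, Finset.mem_powerset]
      exact ⟨Finset.insert_subset hSallow hFallow,
        hFbase.trans (Finset.subset_insert _ _), hno⟩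
    have := hFmax _ hmem
    rw [Finset.card_insert_of_notMem hSF] at this
    omega
  · exact insert_copy hK hM2 hn hSallow hFbase

/-- the saturation number bound -/
lemma satStar_le : satStar (QT P) n ≤ 2 ^ (2 * M) * n := by
  obtain ⟨F, hFallow, hsat⟩ := exists_sat hK hM2 hn
  have h1 : satStar (QT P) n ≤ F.card := Nat.sInf_le ⟨F, hsat, rfl⟩
  have h2 : F.card ≤ (allowFam n M K).card := Finset.card_le_card hFallow
  have h3 := allow_card hK hM2 hn
  have h4 : K ≤ n := by
    rw [hK]
    exact Nat.div_le_self _ _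
  have h5 : K * 2 ^ (2*M) ≤ n * 2 ^ (2*M) := Nat.mul_le_mul_right _ h4
  have h6 : n * 2 ^ (2*M) = 2 ^ (2*M) * n := Nat.mul_comm _ _
  omega


/-! ### injectivity of the embedding -/
section emb
omit hK hM2 hn

lemma qp_inj : Function.Injective (qp (P := P)) := by
  intro p q h
  rw [qp, qp] at h
  exact WithTop.coe_injective (Sum.inl_injective (WithBot.coe_injective h))

lemma card_QT : Fintype.card (QT P) = Fintype.card P + 3 := by
  rw [card_withBot, Fintype.card_sum, card_withTop, Fintype.card_punit]

end emb

end main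
end S9


/-- For any finite poset `P` there is a finite poset `Q` with at most
`|P| + 3` elements, containing `P` as an induced subposet, and with `sat*(n, Q) = O(n)`. -/
theorem statement9 (P : Type) [PartialOrder P] [Fintype P] :
    ∃ (Q : Type) (instQ : PartialOrder Q) (_ : Fintype Q),
      Nat.card Q ≤ Nat.card P + 3 ∧
      (∃ g : P → Q, Function.Injective g ∧
        ∀ a b : P, a ≤ b ↔ @LE.le Q (@Preorder.toLE Q (@PartialOrder.toPreorder Q instQ)) (g a) (g b)) ∧
      (∃ C N : ℕ, ∀ n ≥ N, @satStar Q instQ n ≤ C * n) := by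
  refine ⟨S9.QT P, inferInstance, inferInstance, ?_, ?_, ?_⟩
  · rw [Nat.card_eq_fintype_card, Nat.card_eq_fintype_card, S9.card_QT]
  · exact ⟨S9.qp, S9.qp_inj, fun a b => (S9.qp_le_qp (P := P)).symm⟩
  · refine ⟨2 ^ (2 * (2 * Fintype.card P + 2)), 2 * Fintype.card P + 2, ?_⟩
    intro n hn
    exact S9.satStar_le (n := n) (M := 2 * Fintype.card P + 2)
      (K := n / (2 * Fintype.card P + 2)) rfl rfl hn
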